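/- Let f be a C² solution on an interval of the equation (p-1)f'²(f''+f') + (p-3)(f'² sin f cos f + f' sin²f) − f'³ + (f''+f') sin²f − sin³f cos f = 0 with p > 1, and suppose f(t) ∈ (0,π) for all t. Define w(t) := cot(f(t)). Then w satisfies w'' = (1+w²+w'²)(2(p-1)ww' + (2-p)(1+w²))w' / ((1+w²)(1+w²+(p-1)w'²)) − w. -/

import Mathlib

open Real

/-- `f` solves the autonomous (logarithmic-variable) equation on `S`. -/
def SolvesAuto (p : ℝ) (f : ℝ → ℝ) (S : Set ℝ) : Prop :=
  ∀ t ∈ S,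
    (p - 1) * (deriv f t) ^ 2 * (deriv (deriv f) t + deriv f t) +
      (p - 3) * ((deriv f t) ^ 2 * Real.sin (f t) * Real.cos (f t) +
        deriv f t * (Real.sin (f t)) ^ 2) -
      (deriv f t) ^ 3 + (deriv (deriv f) t + deriv f t) * (Real.sin (f t)) ^ 2 -
      (Real.sin (f t)) ^ 3 * Real.cos (f t) = 0

lemma key (p s c v A : ℝ) (hs : s ≠ 0) (hpy : s^2 + c^2 = 1)
    (hd : s^2 + (p-1)*v^2 ≠ 0)
    (hode : (p-1)*v^2*(A+v) + (p-3)*(v^2*s*c + v*s^2) - v^3 + (A+v)*s^2 - s^3*c = 0) :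
    (2*s*c*v*v - A*s^2)/(s^2)^2 =
      (1 + (c/s)^2 + (-v/s^2)^2) *
        (2*(p-1)*(c/s)*(-v/s^2) + (2-p)*(1+(c/s)^2)) * (-v/s^2) /
        ((1+(c/s)^2) * (1+(c/s)^2 + (p-1)*(-v/s^2)^2)) - c/s := by
  have h1 : 1 + (c/s)^2 = 1/s^2 := by field_simp; linarith
  rw [h1]
  have hA : A * (s^2 + (p-1)*v^2) = s^3*c - (p-2)*v^3 - (p-3)*(v^2*s*c + v*s^2) - v*s^2 := by
    linear_combination hode
  have hd3 : (s^2)^2 + (p-1)*v^2*s^2 ≠ 0 := by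
    intro h
    have h' : s^2 * (s^2 + (p-1)*v^2) = 0 := by linear_combination h
    rcases mul_eq_zero.mp h' with h'' | h''
    · exact pow_ne_zero 2 hs h''
    · exact hd h''
  have hd' : s^2 + v^2*(p-1) ≠ 0 := by intro h; exact hd (by linear_combination h)
  field_simp
  linear_combination (-s) * hA

/-- If `f` solves the autonomous equation with values in `(0,π)`, then
`w = cot ∘ f` satisfies the algebraic second-order equation \eqref{ODE3}. -/
theorem stmt13 (p a b : ℝ) (hp : 1 < p) (f : ℝ → ℝ)
    (hreg : ContDiffOn ℝ 2 f (Set.Ioo a b))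
    (hrange : ∀ t ∈ Set.Ioo a b, f t ∈ Set.Ioo 0 π)
    (hsol : SolvesAuto p f (Set.Ioo a b))
    (w : ℝ → ℝ) (hw : w = fun t => Real.cos (f t) / Real.sin (f t)) :
    ∀ t ∈ Set.Ioo a b,
      deriv (deriv w) t =
        (1 + (w t) ^ 2 + (deriv w t) ^ 2) *
          (2 * (p - 1) * w t * deriv w t + (2 - p) * (1 + (w t) ^ 2)) * deriv w t /
          ((1 + (w t) ^ 2) * (1 + (w t) ^ 2 + (p - 1) * (deriv w t) ^ 2)) - w t := by
  intro t ht
  have hopen : IsOpen (Set.Ioo a b) := isOpen_Ioo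
  have hmem : Set.Ioo a b ∈ nhds t := hopen.mem_nhds ht
  have hfd : ∀ x ∈ Set.Ioo a b, HasDerivAt f (deriv f x) x := fun x hx =>
    ((hreg.differentiableOn (by norm_num)).differentiableAt (hopen.mem_nhds hx)).hasDerivAt
  have hsin : ∀ x ∈ Set.Ioo a b, Real.sin (f x) ≠ 0 := fun x hx =>
    ne_of_gt (Real.sin_pos_of_pos_of_lt_pi (hrange x hx).1 (hrange x hx).2)
  have hw' : ∀ x ∈ Set.Ioo a b, HasDerivAt w (-(deriv f x) / (Real.sin (f x))^2) x := by
    intro x hx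
    have hf := hfd x hx
    have hc : HasDerivAt (fun y => Real.cos (f y)) (-Real.sin (f x) * deriv f x) x :=
      (Real.hasDerivAt_cos (f x)).comp x hf
    have hs : HasDerivAt (fun y => Real.sin (f y)) (Real.cos (f x) * deriv f x) x :=
      (Real.hasDerivAt_sin (f x)).comp x hf
    have hdiv : HasDerivAt (fun y => Real.cos (f y) / Real.sin (f y)) _ x := hc.div hs (hsin x hx)
    rw [hw]
    convert hdiv using 1
    have h1 := Real.sin_sq_add_cos_sq (f x)
    have hsx := hsin x hx
    field_simp
    linear_combination (deriv f x) * h1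
  -- deriv w agrees with explicit formula near t
  have hev : deriv w =ᶠ[nhds t] fun x => -(deriv f x) / (Real.sin (f x))^2 := by
    filter_upwards [hmem] with x hx
    exact (hw' x hx).deriv
  have hdd : deriv (deriv w) t = deriv (fun x => -(deriv f x) / (Real.sin (f x))^2) t :=
    hev.deriv_eq
  -- second derivative
  have hdf : HasDerivAt (deriv f) (deriv (deriv f) t) t := by
    have h1 : ContDiffOn ℝ 1 (deriv f) (Set.Ioo a b) :=
      hreg.deriv_of_isOpen hopen (by norm_num)
    exact ((h1.differentiableOn (by norm_num)).differentiableAt hmem).hasDerivAt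
  set s := Real.sin (f t) with hsdef
  set c := Real.cos (f t) with hcdef
  set v := deriv f t with hvdef
  set A := deriv (deriv f) t with hAdef
  have hst : s ≠ 0 := hsin t ht
  have hden : HasDerivAt (fun x => (Real.sin (f x))^2) (2 * s * (c * v)) t := by
    have hs : HasDerivAt (fun y => Real.sin (f y)) (c * v) t :=
      (Real.hasDerivAt_sin (f t)).comp t (hfd t ht)
    have : HasDerivAt (fun x => (Real.sin (f x))^2) _ t := hs.pow 2
    convert this using 1
    ring
  have hnum : HasDerivAt (fun x => -(deriv f x)) (-A) t := hdf.neg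
  have hg : HasDerivAt (fun x => -(deriv f x) / (Real.sin (f x))^2)
      (((-A) * s^2 - (-v) * (2 * s * (c * v))) / (s^2)^2) t := by
    have : HasDerivAt (fun x => -(deriv f x) / (Real.sin (f x))^2) _ t := hnum.div hden (pow_ne_zero 2 hst)
    convert this using 2
  have hddval : deriv (deriv w) t = (2*s*c*v*v - A*s^2)/(s^2)^2 := by
    rw [hdd, hg.deriv]; ring_nf
  -- first derivative values
  have hwt : w t = c / s := by rw [hw]
  have hw't : deriv w t = -v / s^2 := (hw' t ht).deriv
  rw [hddval, hwt, hw't]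
  have hpy : s^2 + c^2 = 1 := Real.sin_sq_add_cos_sq (f t)
  have hd : s^2 + (p-1)*v^2 ≠ 0 := by
    have h0 : 0 < s^2 := by positivity
    have h1 : 0 ≤ (p-1)*v^2 := by nlinarith [sq_nonneg v]
    nlinarith
  exact key p s c v A hst hpy hd (hsol t ht)
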